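/- Let Φ⁽ⁿ⁾ be the compound point process equal to an i.i.d. renewal process with mean life time μ₁ on (0, nc] and an independent renewal process with mean life time μ₂ on (nc, nT], with counting process N⁽ⁿ⁾. Then for every t ∈ (c - h, c] and h > 0, almost surely (N⁽ⁿ⁾_{n(t+h)} − N⁽ⁿ⁾_{nt})/(nh) → ((t+h-c)/h)·(1/μ₂) + ((c-t)/h)·(1/μ₁) = 1/μ_ri(h,t) as n → ∞. -/

import Mathlib

open MeasureTheory ProbabilityTheory Filter Set Real Topology

set_option maxHeartbeats 1000000

theorem renewal_slln_aux
    {Ω : Type*} [MeasurableSpace Ω] (P : Measure Ω) [IsProbabilityMeasure P]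
    (X : ℕ → Ω → ℝ) (hint : Integrable (X 0) P)
    (hindep : Pairwise (Function.onFun (fun f g => IndepFun f g P) X))
    (hident : ∀ i, IdentDistrib (X i) (X 0) P P)
    (μ : ℝ) (hμ : 0 < μ) (hmean : ∫ ω, X 0 ω ∂P = μ)
    (N : ℝ → Ω → ℕ)
    (hN : ∀ u : ℝ, ∀ ω, ∀ j : ℕ, 1 ≤ j →
      ((∑ i ∈ Finset.range j, X i ω) ≤ u ↔ j ≤ N u ω)) :
    ∀ᵐ ω ∂P, Tendsto (fun u : ℝ => (N u ω : ℝ) / u) atTop (𝓝 (1 / μ)) := by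
  filter_upwards [strong_law_ae_real X hint hindep hident] with ω hω
  rw [hmean] at hω
  -- N u ω → ∞ as u → ∞
  have hNtop : Tendsto (fun u : ℝ => N u ω) atTop atTop := by
    apply tendsto_atTop_atTop.2
    intro j
    refine ⟨∑ i ∈ Finset.range (j + 1), X i ω, fun u hu => ?_⟩
    exact le_trans (Nat.le_succ j) ((hN u ω (j + 1) (Nat.succ_le_succ (Nat.zero_le j))).1 hu)
  have hNtop' : Tendsto (fun u : ℝ => (N u ω : ℝ)) atTop atTop :=
    tendsto_natCast_atTop_atTop.comp hNtop
  -- S_{N u} / N u → μ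
  have h1 : Tendsto (fun u : ℝ => (∑ i ∈ Finset.range (N u ω), X i ω) / (N u ω : ℝ))
      atTop (𝓝 μ) := hω.comp hNtop
  have hN1top : Tendsto (fun u : ℝ => N u ω + 1) atTop atTop :=
    tendsto_atTop_mono (fun u => Nat.le_succ _) hNtop
  have h2 : Tendsto (fun u : ℝ => (∑ i ∈ Finset.range (N u ω + 1), X i ω) / ((N u ω : ℝ) + 1))
      atTop (𝓝 μ) := by
    have := hω.comp hN1top
    simpa [Function.comp_def] using this
  have hxratio : Tendsto (fun x : ℝ => (x + 1) / x) atTop (𝓝 1) := by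
    have h0 : Tendsto (fun x : ℝ => 1 + x⁻¹) atTop (𝓝 (1 + 0)) :=
      tendsto_const_nhds.add tendsto_inv_atTop_zero
    rw [add_zero] at h0
    refine h0.congr' ?_
    filter_upwards [eventually_gt_atTop (0 : ℝ)] with x hx
    field_simp
  have hratio : Tendsto (fun u : ℝ => ((N u ω : ℝ) + 1) / (N u ω : ℝ)) atTop (𝓝 1) :=
    hxratio.comp hNtop'
  have h3 : Tendsto (fun u : ℝ =>
      ((∑ i ∈ Finset.range (N u ω + 1), X i ω) / ((N u ω : ℝ) + 1)) *
        (((N u ω : ℝ) + 1) / (N u ω : ℝ))) atTop (𝓝 μ) := by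
    have := h2.mul hratio
    simpa using this
  -- sandwich for u / N u ω
  have hev : ∀ᶠ u : ℝ in atTop, 1 ≤ N u ω := hNtop.eventually (eventually_ge_atTop 1)
  have hiv : Tendsto (fun u : ℝ => u / (N u ω : ℝ)) atTop (𝓝 μ) := by
    refine tendsto_of_tendsto_of_tendsto_of_le_of_le' h1 h3 ?_ ?_
    · filter_upwards [hev] with u hu
      have hNpos : (0 : ℝ) < (N u ω : ℝ) := by exact_mod_cast hu
      have hle : (∑ i ∈ Finset.range (N u ω), X i ω) ≤ u :=
        (hN u ω (N u ω) hu).2 le_rfl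
      gcongr
    · filter_upwards [hev] with u hu
      have hNpos : (0 : ℝ) < (N u ω : ℝ) := by exact_mod_cast hu
      have hgt : u < ∑ i ∈ Finset.range (N u ω + 1), X i ω := by
        by_contra hcon
        push_neg at hcon
        have := (hN u ω (N u ω + 1) (Nat.succ_le_succ (Nat.zero_le _))).1 hcon
        omega
      have : u / (N u ω : ℝ) ≤ (∑ i ∈ Finset.range (N u ω + 1), X i ω) / (N u ω : ℝ) := by
        gcongr
      calc u / (N u ω : ℝ) ≤ (∑ i ∈ Finset.range (N u ω + 1), X i ω) / (N u ω : ℝ) := this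
        _ = ((∑ i ∈ Finset.range (N u ω + 1), X i ω) / ((N u ω : ℝ) + 1)) *
              (((N u ω : ℝ) + 1) / (N u ω : ℝ)) := by
            have h1 : ((N u ω : ℝ) + 1) ≠ 0 := by positivity
            field_simp
  have hinv : Tendsto (fun u : ℝ => (u / (N u ω : ℝ))⁻¹) atTop (𝓝 μ⁻¹) :=
    hiv.inv₀ (ne_of_gt hμ)
  rw [one_div]
  refine hinv.congr' ?_
  filter_upwards [hev, eventually_gt_atTop (0 : ℝ)] with u hu hupos
  rw [inv_div]


/-- Strong law for counting increments of the compound process with one change point at nc: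
for t ∈ (c-h, c], (N⁽ⁿ⁾_{n(t+h)} - N⁽ⁿ⁾_{nt})/(nh) → ((t+h-c)/h)(1/μ₂) + ((c-t)/h)(1/μ₁). -/
theorem compound_counting_slln
    {Ω : Type*} [MeasurableSpace Ω] (P : Measure Ω) [IsProbabilityMeasure P]
    (ξ₁ ξ₂ : ℕ → Ω → ℝ)
    (hmeas₁ : ∀ i, Measurable (ξ₁ i)) (hmeas₂ : ∀ i, Measurable (ξ₂ i))
    (hindep : iIndepFun (m := fun _ => Real.measurableSpace) (Sum.elim ξ₁ ξ₂) P)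
    (hident₁ : ∀ i, Measure.map (ξ₁ i) P = Measure.map (ξ₁ 1) P)
    (hident₂ : ∀ i, Measure.map (ξ₂ i) P = Measure.map (ξ₂ 1) P)
    (hpos₁ : ∀ i, ∀ᵐ ω ∂P, 0 < ξ₁ i ω) (hpos₂ : ∀ i, ∀ᵐ ω ∂P, 0 < ξ₂ i ω)
    (μ₁ μ₂ : ℝ) (hμ₁ : 0 < μ₁) (hμ₂ : 0 < μ₂)
    (hmean₁ : ∫ ω, ξ₁ 1 ω ∂P = μ₁) (hmean₂ : ∫ ω, ξ₂ 1 ω ∂P = μ₂)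
    (hL2₁ : MemLp (ξ₁ 1) 2 P) (hL2₂ : MemLp (ξ₂ 1) 2 P)
    (S₁ S₂ : ℕ → Ω → ℝ)
    (hS₁ : ∀ j ω, S₁ j ω = ∑ i ∈ Finset.Icc 1 j, ξ₁ i ω)
    (hS₂ : ∀ j ω, S₂ j ω = ∑ i ∈ Finset.Icc 1 j, ξ₂ i ω)
    (N₁ N₂ : ℝ → Ω → ℕ)
    (hN₁ : ∀ u : ℝ, ∀ ω, ∀ j : ℕ, 1 ≤ j → (S₁ j ω ≤ u ↔ j ≤ N₁ u ω))
    (hN₂ : ∀ u : ℝ, ∀ ω, ∀ j : ℕ, 1 ≤ j → (S₂ j ω ≤ u ↔ j ≤ N₂ u ω))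
    (T c h : ℝ) (hT : 0 < T) (hc : c ∈ Set.Ioo 0 T) (hh : h ∈ Set.Ioc 0 (T / 2))
    (Nn : ℕ → ℝ → Ω → ℕ)
    (hNn : ∀ n : ℕ, ∀ u : ℝ, ∀ ω, Nn n u ω =
      if u ≤ (n : ℝ) * c then N₁ u ω
      else N₁ ((n : ℝ) * c) ω + (N₂ u ω - N₂ ((n : ℝ) * c) ω))
    (t : ℝ) (ht : t ∈ Set.Ioc (c - h) c) (htpos : 0 < t) :
    ∀ᵐ ω ∂P, Tendsto
      (fun n : ℕ =>
        (((Nn n ((n : ℝ) * (t + h)) ω : ℝ) - (Nn n ((n : ℝ) * t) ω : ℝ)) / ((n : ℝ) * h)))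
      atTop (nhds (((t + h - c) / h) * (1 / μ₂) + ((c - t) / h) * (1 / μ₁))) := by
  have hcpos : 0 < c := hc.1
  have hhpos : 0 < h := hh.1
  have htc : t ≤ c := ht.2
  have hthc : c < t + h := by have := ht.1; linarith
  have hthpos : 0 < t + h := by linarith
  -- sums over Icc 1 j as range sums of shifted variables
  have hsum : ∀ (ξ : ℕ → Ω → ℝ) (j : ℕ) (ω : Ω),
      ∑ i ∈ Finset.range j, ξ (1 + i) ω = ∑ i ∈ Finset.Icc 1 j, ξ i ω := by
    intro ξ j ω
    rw [← Finset.Ico_add_one_right_eq_Icc, Finset.sum_Ico_eq_sum_range]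
    simp
  -- the two renewal SLLNs
  have A₁ : ∀ᵐ ω ∂P, Tendsto (fun u : ℝ => (N₁ u ω : ℝ) / u) atTop (𝓝 (1 / μ₁)) := by
    refine renewal_slln_aux P (fun i => ξ₁ (1 + i)) (hL2₁.integrable one_le_two)
      (fun i j hij => hindep.indepFun (i := Sum.inl (1 + i)) (j := Sum.inl (1 + j))
        (by simpa using hij))
      (fun i => ⟨(hmeas₁ _).aemeasurable, (hmeas₁ 1).aemeasurable, hident₁ _⟩)
      μ₁ hμ₁ hmean₁ N₁ ?_
    intro u ω j hj
    rw [hsum, ← hS₁]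
    exact hN₁ u ω j hj
  have A₂ : ∀ᵐ ω ∂P, Tendsto (fun u : ℝ => (N₂ u ω : ℝ) / u) atTop (𝓝 (1 / μ₂)) := by
    refine renewal_slln_aux P (fun i => ξ₂ (1 + i)) (hL2₂.integrable one_le_two)
      (fun i j hij => hindep.indepFun (i := Sum.inr (1 + i)) (j := Sum.inr (1 + j))
        (by simpa using hij))
      (fun i => ⟨(hmeas₂ _).aemeasurable, (hmeas₂ 1).aemeasurable, hident₂ _⟩)
      μ₂ hμ₂ hmean₂ N₂ ?_
    intro u ω j hj
    rw [hsum, ← hS₂]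
    exact hN₂ u ω j hj
  filter_upwards [A₁, A₂] with ω hf₁ hf₂
  -- monotonicity of N₂ in u
  have hmono : ∀ u v : ℝ, u ≤ v → N₂ u ω ≤ N₂ v ω := by
    intro u v huv
    rcases Nat.eq_zero_or_pos (N₂ u ω) with h0 | hpos
    · omega
    · exact (hN₂ v ω _ hpos).1 (((hN₂ u ω _ hpos).2 le_rfl).trans huv)
  -- limits of each piece
  have hmulT : ∀ a : ℝ, 0 < a → Tendsto (fun n : ℕ => (n : ℝ) * a) atTop atTop := by
    intro a ha
    exact Tendsto.atTop_mul_const ha tendsto_natCast_atTop_atTop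
  have l1 : Tendsto (fun n : ℕ => (N₁ ((n : ℝ) * c) ω : ℝ) / ((n : ℝ) * c)) atTop
      (𝓝 (1 / μ₁)) := hf₁.comp (hmulT c hcpos)
  have l2 : Tendsto (fun n : ℕ => (N₁ ((n : ℝ) * t) ω : ℝ) / ((n : ℝ) * t)) atTop
      (𝓝 (1 / μ₁)) := hf₁.comp (hmulT t htpos)
  have l3 : Tendsto (fun n : ℕ => (N₂ ((n : ℝ) * (t + h)) ω : ℝ) / ((n : ℝ) * (t + h))) atTop
      (𝓝 (1 / μ₂)) := hf₂.comp (hmulT (t + h) hthpos)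
  have l4 : Tendsto (fun n : ℕ => (N₂ ((n : ℝ) * c) ω : ℝ) / ((n : ℝ) * c)) atTop
      (𝓝 (1 / μ₂)) := hf₂.comp (hmulT c hcpos)
  have lg : Tendsto (fun n : ℕ =>
      (N₁ ((n : ℝ) * c) ω : ℝ) / ((n : ℝ) * c) * (c / h)
        - (N₁ ((n : ℝ) * t) ω : ℝ) / ((n : ℝ) * t) * (t / h)
        + (N₂ ((n : ℝ) * (t + h)) ω : ℝ) / ((n : ℝ) * (t + h)) * ((t + h) / h)
        - (N₂ ((n : ℝ) * c) ω : ℝ) / ((n : ℝ) * c) * (c / h)) atTop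
      (𝓝 ((1 / μ₁) * (c / h) - (1 / μ₁) * (t / h) + (1 / μ₂) * ((t + h) / h)
        - (1 / μ₂) * (c / h))) :=
    (((l1.mul_const _).sub (l2.mul_const _)).add (l3.mul_const _)).sub (l4.mul_const _)
  have hlim_eq : (1 / μ₁) * (c / h) - (1 / μ₁) * (t / h) + (1 / μ₂) * ((t + h) / h)
      - (1 / μ₂) * (c / h) = ((t + h - c) / h) * (1 / μ₂) + ((c - t) / h) * (1 / μ₁) := by
    ring
  rw [hlim_eq] at lg
  refine lg.congr' ?_
  filter_upwards [eventually_ge_atTop 1] with n hn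
  have hnpos : (0 : ℝ) < (n : ℝ) := by exact_mod_cast hn
  have hnc_lt : (n : ℝ) * c < (n : ℝ) * (t + h) := by
    exact mul_lt_mul_of_pos_left hthc hnpos
  have h1 : Nn n ((n : ℝ) * (t + h)) ω
      = N₁ ((n : ℝ) * c) ω + (N₂ ((n : ℝ) * (t + h)) ω - N₂ ((n : ℝ) * c) ω) := by
    rw [hNn]
    exact if_neg (not_le.2 hnc_lt)
  have h2 : Nn n ((n : ℝ) * t) ω = N₁ ((n : ℝ) * t) ω := by
    rw [hNn]
    exact if_pos (by nlinarith)
  have hmle : N₂ ((n : ℝ) * c) ω ≤ N₂ ((n : ℝ) * (t + h)) ω := hmono _ _ hnc_lt.le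
  rw [h1, h2]
  push_cast [hmle]
  have hne : (n : ℝ) ≠ 0 := ne_of_gt hnpos
  have hcne : c ≠ 0 := ne_of_gt hcpos
  have htne : t ≠ 0 := ne_of_gt htpos
  have hthne : t + h ≠ 0 := ne_of_gt hthpos
  have hhne : h ≠ 0 := ne_of_gt hhpos
  field_simp
  ring
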